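/- Let G be a triangle-free graph in which any two vertices at distance 2 have at most two common neighbors, and let C be a dominating set of G. Then for any vertex u not in C, writing X = N(u) ∩ C and Y = N(u) \ C, we have |C| ≥ |X| + ⌈|Y|/2⌉. -/

import Mathlib

open SimpleGraph

/-- In a triangle-free graph where vertices at distance 2 have at most two
common neighbors, for any dominating set `C` and any vertex `u ∉ C`, with
`X = N(u) ∩ C` and `Y = N(u) \ C`, we have `|C| ≥ |X| + ⌈|Y|/2⌉`. -/
theorem stmt6 {V : Type*} [Fintype V] (G : SimpleGraph V)
    (htf : G.CliqueFree 3)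
    (h2 : ∀ x y : V, G.dist x y = 2 →
      {z : V | G.Adj x z ∧ G.Adj y z}.ncard ≤ 2)
    (C : Set V) (hdom : ∀ v : V, v ∈ C ∨ ∃ u ∈ C, G.Adj u v)
    (u : V) (hu : u ∉ C) :
    (G.neighborSet u ∩ C).ncard + ((G.neighborSet u \ C).ncard + 1) / 2 ≤
      C.ncard := by
  classical
  set Y : Set V := G.neighborSet u \ C with hYdef
  have hdomY : ∀ y ∈ Y, ∃ c ∈ C, G.Adj c y := by
    intro y hy
    rcases hdom y with h | h
    · exact absurd h hy.2
    · exact h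
  choose! f hfC hfAdj using hdomY
  -- f y is not adjacent to u (triangle-free)
  have hnadj : ∀ y ∈ Y, ¬ G.Adj u (f y) := by
    intro y hy hadj
    exact htf {u, y, f y}
      (SimpleGraph.is3Clique_triple_iff.2 ⟨hy.1, hadj, (hfAdj y hy).symm⟩)
  have hfne : ∀ y ∈ Y, f y ≠ u := by
    intro y hy h
    exact hu (h ▸ hfC y hy)
  -- dist u (f y) = 2
  have hdist : ∀ y ∈ Y, G.dist u (f y) = 2 := by
    intro y hy
    have hle : G.dist u (f y) ≤ 2 := by
      exact SimpleGraph.dist_le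
        (SimpleGraph.Walk.cons hy.1
          (SimpleGraph.Walk.cons (hfAdj y hy).symm SimpleGraph.Walk.nil))
    have hpos : 0 < G.dist u (f y) :=
      SimpleGraph.Reachable.pos_dist_of_ne
        ⟨SimpleGraph.Walk.cons hy.1 (SimpleGraph.Walk.cons (hfAdj y hy).symm SimpleGraph.Walk.nil)⟩
        (Ne.symm (hfne y hy))
    have hne1 : G.dist u (f y) ≠ 1 := by
      intro h
      exact hnadj y hy (SimpleGraph.dist_eq_one_iff_adj.1 h)
    omega
  -- Finset versions
  have hYfin : Y.Finite := Set.toFinite _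
  have hCfin : C.Finite := Set.toFinite _
  set Yf : Finset V := hYfin.toFinset with hYf
  set D : Finset V := Yf.image f with hD
  -- fibers of f on Yf have size ≤ 2
  have hfiber : ∀ c ∈ D, (Yf.filter (fun y => f y = c)).card ≤ 2 := by
    intro c hc
    obtain ⟨y₀, hy₀, rfl⟩ := Finset.mem_image.1 hc
    have hy₀Y : y₀ ∈ Y := hYfin.mem_toFinset.1 hy₀
    have h2' := h2 u (f y₀) (hdist y₀ hy₀Y)
    calc (Yf.filter (fun y => f y = f y₀)).card
        = ((Yf.filter (fun y => f y = f y₀) : Finset V) : Set V).ncard := by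
          rw [Set.ncard_coe_finset]
      _ ≤ {z : V | G.Adj u z ∧ G.Adj (f y₀) z}.ncard := by
          apply Set.ncard_le_ncard _ (Set.toFinite _)
          intro z hz
          simp only [Finset.coe_filter, Set.mem_setOf_eq] at hz
          obtain ⟨hzY, hzf⟩ := hz
          have hzY' : z ∈ Y := hYfin.mem_toFinset.1 hzY
          exact ⟨hzY'.1, hzf ▸ (hfAdj z hzY')⟩
      _ ≤ 2 := h2'
  have hYcard : Yf.card ≤ 2 * D.card := Finset.card_le_mul_card_image Yf 2 hfiber
  -- D ⊆ C, disjoint from X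
  set X : Set V := G.neighborSet u ∩ C with hXdef
  have hXfin : X.Finite := Set.toFinite _
  set Xf : Finset V := hXfin.toFinset with hXf
  have hDC : ∀ c ∈ D, c ∈ C := by
    intro c hc
    obtain ⟨y, hy, rfl⟩ := Finset.mem_image.1 hc
    exact hfC y (hYfin.mem_toFinset.1 hy)
  have hdisj : Disjoint Xf D := by
    rw [Finset.disjoint_left]
    rintro a ha haD
    obtain ⟨y, hy, hya⟩ := Finset.mem_image.1 haD
    exact hnadj y (hYfin.mem_toFinset.1 hy) (hya.symm ▸ (hXfin.mem_toFinset.1 ha).1)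
  have hsub : Xf ∪ D ⊆ hCfin.toFinset := by
    intro a ha
    rw [Set.Finite.mem_toFinset]
    rcases Finset.mem_union.1 ha with h | h
    · exact (hXfin.mem_toFinset.1 h).2
    · exact hDC a h
  have hcard : Xf.card + D.card ≤ hCfin.toFinset.card := by
    rw [← Finset.card_union_of_disjoint hdisj]
    exact Finset.card_le_card hsub
  have hXn : X.ncard = Xf.card := Set.ncard_eq_toFinset_card X hXfin
  have hYn : Y.ncard = Yf.card := Set.ncard_eq_toFinset_card Y hYfin
  have hCn : C.ncard = hCfin.toFinset.card := Set.ncard_eq_toFinset_card C hCfin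
  omega
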